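/- Let G₁ and G₂ be finitely generated torsion-free nilpotent groups and d ∈ ℕ. Then Pol_d(G₁ × G₂) equals the ℝ-linear span of the functions (g₁, g₂) ↦ f₁(g₁)·f₂(g₂), where f₁ ∈ Pol_a(G₁), f₂ ∈ Pol_b(G₂) and a + b ≤ d. In particular each such product function lies in Pol_d(G₁ × G₂), and conversely every element of Pol_d(G₁ × G₂) is a finite ℝ-linear combination of such products. -/

import Mathlib

/-- The left difference operator: `(∂_g ξ)(h) = ξ(g⁻¹h) - ξ(h)`. -/
def lDiff {G : Type*} [Group G] (g : G) (ξ : G → ℝ) : G → ℝ :=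
  fun h => ξ (g⁻¹ * h) - ξ h

/-- `ξ` is a polynomial map of degree at most `d`. -/
def IsPolyLe {G : Type*} [Group G] (d : ℕ) (ξ : G → ℝ) : Prop :=
  ∀ gs : List G, gs.length = d + 1 → gs.foldr lDiff ξ = 0

/-- A monoid is torsion-free if its only element of finite order is `1`
(the definition of `Monoid.IsTorsionFree` in the older Mathlib, since removed). -/
def Monoid.IsTorsionFree (G : Type*) [Monoid G] : Prop :=
  ∀ g : G, g ≠ 1 → ¬IsOfFinOrder g

namespace PolAux

variable {G : Type*} [Group G]

lemma lDiff_add (g : G) (ξ η : G → ℝ) : lDiff g (ξ + η) = lDiff g ξ + lDiff g η := by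
  funext h; simp [lDiff]; ring

lemma lDiff_smul (g : G) (c : ℝ) (ξ : G → ℝ) : lDiff g (c • ξ) = c • lDiff g ξ := by
  funext h; simp [lDiff]; ring

lemma lDiff_zero (g : G) : lDiff g (0 : G → ℝ) = 0 := by
  funext h; simp [lDiff]

lemma foldr_lDiff_zero (gs : List G) : gs.foldr lDiff (0 : G → ℝ) = 0 := by
  induction gs with
  | nil => rfl
  | cons g gs ih => simp [List.foldr_cons, ih, lDiff_zero]

lemma foldr_lDiff_add (gs : List G) (ξ η : G → ℝ) :
    gs.foldr lDiff (ξ + η) = gs.foldr lDiff ξ + gs.foldr lDiff η := by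
  induction gs with
  | nil => rfl
  | cons g gs ih => simp [List.foldr_cons, ih, lDiff_add]

lemma foldr_lDiff_smul (gs : List G) (c : ℝ) (ξ : G → ℝ) :
    gs.foldr lDiff (c • ξ) = c • gs.foldr lDiff ξ := by
  induction gs with
  | nil => rfl
  | cons g gs ih => simp [List.foldr_cons, ih, lDiff_smul]

/-- `Pol_d(G)` as a submodule of `G → ℝ`. -/
def polyLe (d : ℕ) (G : Type*) [Group G] : Submodule ℝ (G → ℝ) where
  carrier := {ξ | IsPolyLe d ξ}
  zero_mem' := fun gs _ => foldr_lDiff_zero gs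
  add_mem' := by
    intro ξ η hξ hη gs hlen
    rw [foldr_lDiff_add, hξ gs hlen, hη gs hlen, add_zero]
  smul_mem' := by
    intro c ξ hξ gs hlen
    rw [foldr_lDiff_smul, hξ gs hlen, smul_zero]

@[simp] lemma mem_polyLe {d : ℕ} {ξ : G → ℝ} : ξ ∈ polyLe d G ↔ IsPolyLe d ξ := Iff.rfl

lemma isPolyLe_succ_iff {d : ℕ} {ξ : G → ℝ} :
    IsPolyLe (d + 1) ξ ↔ ∀ g : G, IsPolyLe d (lDiff g ξ) := by
  constructor
  · intro h g gs hlen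
    have := h (gs ++ [g]) (by simp [hlen])
    rwa [List.foldr_concat] at this
  · intro h gs hlen
    rcases List.eq_nil_or_concat gs with rfl | ⟨L, b, rfl⟩
    · simp at hlen
    · rw [List.concat_eq_append, List.foldr_concat]
      exact h b L (by simpa using hlen)

lemma lDiff_isPolyLe {d : ℕ} {ξ : G → ℝ} (h : IsPolyLe (d + 1) ξ) (g : G) :
    IsPolyLe d (lDiff g ξ) := isPolyLe_succ_iff.1 h g

lemma isPolyLe_succ_of {d : ℕ} {ξ : G → ℝ} (h : IsPolyLe d ξ) : IsPolyLe (d + 1) ξ := by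
  intro gs hlen
  match gs, hlen with
  | g :: gs, hlen =>
    rw [List.foldr_cons, h gs (by simpa using hlen), lDiff_zero]

lemma isPolyLe_mono {a d : ℕ} (h : a ≤ d) {ξ : G → ℝ} (hξ : IsPolyLe a ξ) : IsPolyLe d ξ := by
  induction d with
  | zero => simpa [Nat.le_zero.1 h] using hξ
  | succ d ih =>
    rcases Nat.lt_or_ge a (d + 1) with h' | h'
    · exact isPolyLe_succ_of (ih (Nat.lt_succ_iff.1 h'))
    · have : a = d + 1 := le_antisymm h h'
      subst this; exact hξ

lemma foldr_lDiff_translate (h : G) (ξ : G → ℝ) (gs : List G) :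
    gs.foldr lDiff (fun x => ξ (h⁻¹ * x)) =
      fun x => ((gs.map fun g => h⁻¹ * g * h).foldr lDiff ξ) (h⁻¹ * x) := by
  induction gs with
  | nil => rfl
  | cons g gs ih =>
    rw [List.foldr_cons, ih, List.map_cons, List.foldr_cons]
    funext x
    simp only [lDiff, mul_inv_rev, inv_inv]
    congr 2
    group

lemma isPolyLe_translate {d : ℕ} {ξ : G → ℝ} (hξ : IsPolyLe d ξ) (h : G) :
    IsPolyLe d (fun x => ξ (h⁻¹ * x)) := by
  intro gs hlen
  rw [foldr_lDiff_translate]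
  rw [hξ (gs.map fun g => h⁻¹ * g * h) (by simpa using hlen)]
  rfl

end PolAux

namespace PolAux

variable {G₁ G₂ : Type*} [Group G₁] [Group G₂]

lemma lDiff_mul_prod (f₁ : G₁ → ℝ) (f₂ : G₂ → ℝ) (g : G₁) (h : G₂) :
    lDiff (g, h) (fun p : G₁ × G₂ => f₁ p.1 * f₂ p.2) =
      (fun p : G₁ × G₂ => lDiff g f₁ p.1 * f₂ (h⁻¹ * p.2)) +
      (fun p : G₁ × G₂ => f₁ p.1 * lDiff h f₂ p.2) := by
  funext p
  simp [lDiff, Prod.fst, Prod.snd]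
  ring

lemma isPolyLe_prod : ∀ (n a b : ℕ) (f₁ : G₁ → ℝ) (f₂ : G₂ → ℝ), a + b = n →
    IsPolyLe a f₁ → IsPolyLe b f₂ →
    IsPolyLe n (fun p : G₁ × G₂ => f₁ p.1 * f₂ p.2) := by
  intro n
  induction n with
  | zero =>
    intro a b f₁ f₂ hab h₁ h₂
    obtain ⟨rfl, rfl⟩ : a = 0 ∧ b = 0 := by omega
    intro gs hlen
    match gs, hlen with
    | [(g, h)], _ =>
      have e₁ : lDiff g f₁ = 0 := h₁ [g] rfl
      have e₂ : lDiff h f₂ = 0 := h₂ [h] rfl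
      rw [List.foldr_cons, List.foldr_nil, lDiff_mul_prod, e₁, e₂]
      funext p; simp
  | succ n ih =>
    intro a b f₁ f₂ hab h₁ h₂
    rw [isPolyLe_succ_iff]
    rintro ⟨g, h⟩
    rw [lDiff_mul_prod]
    have hA : IsPolyLe n (fun p : G₁ × G₂ => lDiff g f₁ p.1 * f₂ (h⁻¹ * p.2)) := by
      cases a with
      | zero =>
        have e₁ : lDiff g f₁ = 0 := h₁ [g] rfl
        rw [e₁]
        have : (fun p : G₁ × G₂ => (0 : G₁ → ℝ) p.1 * f₂ (h⁻¹ * p.2)) = 0 := by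
          funext p; simp
        rw [this]
        exact (polyLe n (G₁ × G₂)).zero_mem
      | succ a' =>
        exact ih a' b (lDiff g f₁) (fun y => f₂ (h⁻¹ * y)) (by omega)
          (lDiff_isPolyLe h₁ g) (isPolyLe_translate h₂ h)
    have hB : IsPolyLe n (fun p : G₁ × G₂ => f₁ p.1 * lDiff h f₂ p.2) := by
      cases b with
      | zero =>
        have e₂ : lDiff h f₂ = 0 := h₂ [h] rfl
        rw [e₂]
        have : (fun p : G₁ × G₂ => f₁ p.1 * (0 : G₂ → ℝ) p.2) = 0 := by
          funext p; simp
        rw [this]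
        exact (polyLe n (G₁ × G₂)).zero_mem
      | succ b' =>
        exact ih a b' f₁ (lDiff h f₂) (by omega) h₁ (lDiff_isPolyLe h₂ h)
    exact (polyLe n (G₁ × G₂)).add_mem hA hB

/-- The generating set of product functions. -/
def genSet (d : ℕ) (G₁ G₂ : Type*) [Group G₁] [Group G₂] : Set (G₁ × G₂ → ℝ) :=
  {F : G₁ × G₂ → ℝ |
    ∃ (a b : ℕ) (f₁ : G₁ → ℝ) (f₂ : G₂ → ℝ), a + b ≤ d ∧
      IsPolyLe a f₁ ∧ IsPolyLe b f₂ ∧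
      F = fun p => f₁ p.1 * f₂ p.2}

lemma genSet_subset (d : ℕ) : genSet d G₁ G₂ ⊆ (polyLe d (G₁ × G₂) : Set (G₁ × G₂ → ℝ)) := by
  rintro F ⟨a, b, f₁, f₂, hab, h₁, h₂, rfl⟩
  exact isPolyLe_mono hab (isPolyLe_prod (a + b) a b f₁ f₂ rfl h₁ h₂)

end PolAux

namespace PolAux

variable {G₁ G₂ : Type*} [Group G₁] [Group G₂]

/-- The slice of a function on a product at a fixed first coordinate. -/
def slc (x : G₁) (F : G₁ × G₂ → ℝ) : G₂ → ℝ := fun y => F (x, y)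

lemma slc_lDiff₂ (x : G₁) (h : G₂) (F : G₁ × G₂ → ℝ) :
    slc x (lDiff ((1 : G₁), h) F) = lDiff h (slc x F) := by
  funext y; simp [slc, lDiff]

lemma slc_foldr₂ (x : G₁) (hs : List G₂) (F : G₁ × G₂ → ℝ) :
    slc x ((hs.map fun h => ((1 : G₁), h)).foldr lDiff F) = hs.foldr lDiff (slc x F) := by
  induction hs with
  | nil => rfl
  | cons h hs ih =>
    rw [List.map_cons, List.foldr_cons, List.foldr_cons, slc_lDiff₂, ih]

omit [Group G₁] [Group G₂] in
lemma slc_zero (x : G₁) : slc x (0 : G₁ × G₂ → ℝ) = 0 := rfl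

lemma slc_lDiff₁ (x : G₁) (g : G₁) (F : G₁ × G₂ → ℝ) :
    slc x (lDiff (g, (1 : G₂)) F) = slc (g⁻¹ * x) F - slc x F := by
  funext y; simp [slc, lDiff]

lemma foldr_comm₁ (Λ : (G₂ → ℝ) →ₗ[ℝ] ℝ) (gs : List G₁) (F : G₁ × G₂ → ℝ) :
    gs.foldr lDiff (fun x => Λ (slc x F)) =
      fun x => Λ (slc x ((gs.map fun g => (g, (1 : G₂))).foldr lDiff F)) := by
  induction gs with
  | nil => rfl
  | cons g gs ih =>
    rw [List.foldr_cons, ih, List.map_cons, List.foldr_cons]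
    funext x
    simp only [lDiff, slc_lDiff₁]
    rw [map_sub]

/-- Mixed difference lemma: slices of iterated first-coordinate differences of an
element of `Pol_d` lie in `Pol_b` whenever `gs.length + b = d`. -/
lemma slc_mix {d : ℕ} {F : G₁ × G₂ → ℝ} (hF : IsPolyLe d F) (gs : List G₁) (b : ℕ)
    (hl : gs.length + b = d) (x : G₁) :
    IsPolyLe b (slc x ((gs.map fun g => (g, (1 : G₂))).foldr lDiff F)) := by
  intro hs hlen
  rw [← slc_foldr₂, ← List.foldr_append]
  rw [hF ((hs.map fun h => ((1 : G₁), h)) ++ gs.map fun g => (g, (1 : G₂)))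
    (by simp [hlen]; omega)]
  rfl

lemma slc_isPolyLe {d : ℕ} {F : G₁ × G₂ → ℝ} (hF : IsPolyLe d F) (x : G₁) :
    IsPolyLe d (slc x F) := by
  have := slc_mix hF [] d (by simp) x
  simpa using this

/-- `Pol_d(G)` is finite dimensional for a finitely generated group `G`. -/
lemma polyLe_finiteDimensional (G : Type*) [Group G] [Group.FG G] :
    ∀ d : ℕ, FiniteDimensional ℝ (polyLe d G) := by
  intro d
  induction d with
  | zero =>
    have hinj : Function.Injective
        (((LinearMap.proj (R := ℝ) (φ := fun _ : G => ℝ) (1 : G))).comp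
          (polyLe 0 G).subtype) := by
      intro ξ η hξη
      ext g
      have h1 : ∀ (ζ : polyLe 0 G) (g : G), (ζ : G → ℝ) g = (ζ : G → ℝ) 1 := by
        intro ζ g
        have := ζ.2 [g⁻¹] rfl
        have := congrFun this 1
        simp only [List.foldr_cons, List.foldr_nil, lDiff, inv_inv, mul_one,
          Pi.zero_apply, sub_eq_zero] at this
        exact this
      rw [h1 ξ g, h1 η g]
      exact hξη
    exact FiniteDimensional.of_injective _ hinj
  | succ d ih =>
    obtain ⟨S, hSclos, hSfin⟩ := Group.fg_iff.1 (inferInstance : Group.FG G)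
    haveI := hSfin.to_subtype
    haveI := ih
    -- the second component map
    have hmem : ∀ (s : S) (ξ : polyLe (d + 1) G), lDiff (s : G) (ξ : G → ℝ) ∈ polyLe d G :=
      fun s ξ => lDiff_isPolyLe ξ.2 s
    let lDiffL : G → (G → ℝ) →ₗ[ℝ] (G → ℝ) := fun g =>
      { toFun := lDiff g
        map_add' := fun ξ η => lDiff_add g ξ η
        map_smul' := fun c ξ => lDiff_smul g c ξ }
    let Φ : polyLe (d + 1) G →ₗ[ℝ] ℝ × (S → polyLe d G) :=
      LinearMap.prod
        (((LinearMap.proj (R := ℝ) (φ := fun _ : G => ℝ) (1 : G))).comp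
          (polyLe (d + 1) G).subtype)
        (LinearMap.pi fun s =>
          LinearMap.codRestrict (polyLe d G)
            ((lDiffL (s : G)).comp (polyLe (d + 1) G).subtype) (fun ξ => hmem s ξ))
    have hinj : Function.Injective Φ := by
      rw [← LinearMap.ker_eq_bot, LinearMap.ker_eq_bot']
      intro ξ hξ
      have h1 : (ξ : G → ℝ) 1 = 0 := congrArg Prod.fst hξ
      have h2 : ∀ s : S, lDiff (s : G) (ξ : G → ℝ) = 0 := by
        intro s
        have := congrFun (congrArg Prod.snd hξ) s
        exact congrArg Subtype.val this
      -- the set of g acting trivially is a subgroup containing S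
      let H : Subgroup G :=
        { carrier := {g | ∀ h, (ξ : G → ℝ) (g⁻¹ * h) = (ξ : G → ℝ) h}
          one_mem' := by intro h; simp
          mul_mem' := by
            intro a b ha hb h
            rw [mul_inv_rev, mul_assoc, hb, ha]
          inv_mem' := by
            intro a ha h
            have := ha (a * h)
            rw [inv_mul_cancel_left] at this
            rw [inv_inv, this] }
      have hH : H = ⊤ := top_unique (hSclos ▸ Subgroup.closure_le H |>.2
        (fun s hs => by
          intro h
          have := congrFun (h2 ⟨s, hs⟩) h
          simpa [lDiff, sub_eq_zero] using this))
      ext g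
      have hg : g⁻¹ ∈ H := hH ▸ Subgroup.mem_top g⁻¹
      have := hg 1
      rw [inv_inv, mul_one] at this
      simp [this, h1]
    exact FiniteDimensional.of_injective Φ hinj

end PolAux

namespace PolAux

/-- Core linear-algebra lemma: given `A ≤ B` with `B` finite dimensional, there is a
finite family `e j ∈ B` with functionals `Λ j` vanishing on `A` reproducing `B` modulo `A`. -/
lemma core {V : Type*} [AddCommGroup V] [Module ℝ V] (A B : Submodule ℝ V) (hAB : A ≤ B)
    [FiniteDimensional ℝ B] :
    ∃ (n : ℕ) (e : Fin n → V) (Λ : Fin n → (V →ₗ[ℝ] ℝ)),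
      (∀ j, e j ∈ B) ∧ (∀ j, ∀ a ∈ A, Λ j a = 0) ∧
      (∀ v (hv : v ∈ B), v - ∑ j, Λ j v • e j ∈ A) := by
  obtain ⟨q, hq⟩ := Submodule.exists_isCompl B
  let π : V →ₗ[ℝ] B := B.linearProjOfIsCompl q hq
  let A' : Submodule ℝ B := A.comap B.subtype
  obtain ⟨C, hC⟩ := Submodule.exists_isCompl A'
  let ρ : B →ₗ[ℝ] C := C.linearProjOfIsCompl A' hC.symm
  let bC := Module.finBasis ℝ C
  refine ⟨Module.finrank ℝ C, fun j => (((bC j : C) : B) : V),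
    fun j => (bC.coord j).comp (ρ.comp π), fun j => ((bC j : C) : B).2, ?_, ?_⟩
  · intro j a ha
    have h1 : π a = ⟨a, hAB ha⟩ := Submodule.linearProjOfIsCompl_apply_left hq ⟨a, hAB ha⟩
    have hmem : (⟨a, hAB ha⟩ : B) ∈ A' := ha
    have h2 : ρ ⟨a, hAB ha⟩ = 0 :=
      Submodule.projectionOnto_apply_of_mem_right hC.symm hmem
    simp only [LinearMap.comp_apply, π, ρ] at *
    rw [h1, h2, map_zero]
  · intro v hv
    have h1 : π v = ⟨v, hv⟩ := Submodule.linearProjOfIsCompl_apply_left hq ⟨v, hv⟩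
    set x : B := ⟨v, hv⟩ with hx
    have hsplit : ((A'.linearProjOfIsCompl C hC x : B) : B) + ((ρ x : C) : B) = x :=
      Submodule.projection_add_projection_eq_self hC x
    have hsum : ∑ j, bC.repr (ρ x) j • (bC j) = ρ x := bC.sum_repr (ρ x)
    have hΛ : ∀ j, ((bC.coord j).comp (ρ.comp π)) v = bC.repr (ρ x) j := by
      intro j
      simp only [LinearMap.comp_apply, π, h1, ← hx, Module.Basis.coord_apply]
    have hsum2 : (∑ j, ((bC.coord j).comp (ρ.comp π)) v • (((bC j : C) : B) : V))
        = ((ρ x : C) : B) := by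
      rw [← hsum]
      push_cast
      refine Finset.sum_congr rfl fun j _ => ?_
      have h := hΛ j
      simp only [LinearMap.coe_comp, Function.comp_apply] at h ⊢
      rw [h]
    rw [hsum2]
    have : v - ((ρ x : C) : B) = ((A'.linearProjOfIsCompl C hC x : B) : V) := by
      have := congrArg (Subtype.val : B → V) hsplit
      push_cast at this
      rw [show v = (x : V) from rfl, ← this]
      abel
    rw [this]
    exact (A'.linearProjOfIsCompl C hC x).2

end PolAux

namespace PolAux

lemma claimB {G₁ G₂ : Type*} [Group G₁] [Group G₂] [Group.FG G₂] (d : ℕ) :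
    ∀ b : ℕ, b ≤ d → ∀ F : G₁ × G₂ → ℝ, IsPolyLe d F →
      (∀ x, IsPolyLe b (slc x F)) → F ∈ Submodule.span ℝ (genSet d G₁ G₂) := by
  intro b
  induction b with
  | zero =>
    intro _ F hF hslc
    have hf : IsPolyLe d (fun x : G₁ => F (x, 1)) := by
      intro gs hlen
      have hcomm := foldr_comm₁ (G₁ := G₁)
        (LinearMap.proj (R := ℝ) (φ := fun _ : G₂ => ℝ) (1 : G₂)) gs F
      have heq : (fun x : G₁ => F (x, 1)) =
          fun x => (LinearMap.proj (R := ℝ) (φ := fun _ : G₂ => ℝ) (1 : G₂)) (slc x F) := rfl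
      rw [heq, hcomm, hF (gs.map fun g => (g, (1 : G₂))) (by simpa using hlen)]
      rfl
    have h1 : IsPolyLe 0 (fun _ : G₂ => (1 : ℝ)) := by
      intro gs hlen
      match gs, hlen with
      | [g], _ => funext h; simp [lDiff]
    have hFeq : F = fun p : G₁ × G₂ =>
        (fun x : G₁ => F (x, 1)) p.1 * (fun _ : G₂ => (1 : ℝ)) p.2 := by
      funext p
      obtain ⟨x, y⟩ := p
      have h0 := congrFun (hslc x [y⁻¹] rfl) 1
      simp only [List.foldr_cons, List.foldr_nil, lDiff, slc, inv_inv, mul_one,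
        Pi.zero_apply, sub_eq_zero] at h0
      simp [h0]
    exact Submodule.subset_span ⟨d, 0, _, _, by omega, hf, h1, hFeq⟩
  | succ b ih =>
    intro hb1 F hF hslc
    haveI := polyLe_finiteDimensional G₂ (b + 1)
    obtain ⟨n, e, Λ, he, hΛA, hrepr⟩ := core (polyLe b G₂) (polyLe (b + 1) G₂)
      (fun ξ hξ => isPolyLe_succ_of hξ)
    set c : Fin n → G₁ → ℝ := fun j x => Λ j (slc x F) with hc
    have hcj : ∀ j, IsPolyLe (d - (b + 1)) (c j) := by
      intro j gs hlen
      have hcomm := foldr_comm₁ (Λ j) gs F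
      rw [hc, hcomm]
      funext x
      have hmem : IsPolyLe b (slc x ((gs.map fun g => (g, (1 : G₂))).foldr lDiff F)) :=
        slc_mix hF gs b (by omega) x
      simpa using hΛA j _ hmem
    have hTgen : ∀ j, (fun p : G₁ × G₂ => c j p.1 * e j p.2) ∈ genSet d G₁ G₂ :=
      fun j => ⟨d - (b + 1), b + 1, c j, e j, by omega, hcj j, he j, rfl⟩
    set Tsum : G₁ × G₂ → ℝ := ∑ j, (fun p : G₁ × G₂ => c j p.1 * e j p.2) with hT
    have hG_poly : IsPolyLe d (F - Tsum) :=
      (polyLe d (G₁ × G₂)).sub_mem hF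
        (Submodule.sum_mem _ fun j _ => genSet_subset d (hTgen j))
    have hG_slc : ∀ x, IsPolyLe b (slc x (F - Tsum)) := by
      intro x
      have key := hrepr (slc x F) (hslc x)
      have heq : slc x (F - Tsum) = slc x F - ∑ j, Λ j (slc x F) • e j := by
        funext y
        simp [slc, hT, Finset.sum_apply, c]
      rw [heq]
      exact key
    have hG := ih (by omega) (F - Tsum) hG_poly hG_slc
    have hsplit : F = (F - Tsum) + Tsum := by abel
    rw [hsplit]
    exact Submodule.add_mem _ hG
      (Submodule.sum_mem _ fun j _ => Submodule.subset_span (hTgen j))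

end PolAux

/-- For finitely generated torsion-free nilpotent groups `G₁, G₂`,
`Pol_d(G₁ × G₂)` is the `ℝ`-linear span of products `(g₁,g₂) ↦ f₁(g₁)·f₂(g₂)` with
`f₁ ∈ Pol_a(G₁)`, `f₂ ∈ Pol_b(G₂)` and `a + b ≤ d`. -/
theorem stmt11 {G₁ G₂ : Type*} [Group G₁] [Group G₂]
    [Group.FG G₁] (hTF₁ : Monoid.IsTorsionFree G₁) [Group.IsNilpotent G₁]
    [Group.FG G₂] (hTF₂ : Monoid.IsTorsionFree G₂) [Group.IsNilpotent G₂]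
    (d : ℕ) :
    {F : G₁ × G₂ → ℝ | IsPolyLe d F} =
      (Submodule.span ℝ {F : G₁ × G₂ → ℝ |
        ∃ (a b : ℕ) (f₁ : G₁ → ℝ) (f₂ : G₂ → ℝ), a + b ≤ d ∧
          IsPolyLe a f₁ ∧ IsPolyLe b f₂ ∧
          F = fun p => f₁ p.1 * f₂ p.2} : Set (G₁ × G₂ → ℝ)) := by
  ext F
  constructor
  · intro hF
    exact PolAux.claimB d d le_rfl F hF fun x => PolAux.slc_isPolyLe hF x
  · intro hF
    exact Submodule.span_le.2 (PolAux.genSet_subset d) hF
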